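/- Let (V,E) be a Bratteli diagram with random walk (p, ν_0) of full support, Markov measure μ on path space X and tail equivalence relation R. If f ∈ L^∞(X, μ) is a bounded nonnegative tail-invariant function (f(x) = f(y) whenever x, y are tail equivalent, μ-a.e.), define for each n the function h_n on V(n) by h_n·ν_n = pushforward of f·μ under r_n : X → V(n), r_n(e_1e_2…) = r(e_n) (i.e. h_n is the Radon–Nikodym derivative of (r_n)_*(fμ) with respect to ν_n). Then (h_n) is a bounded harmonic sequence: h_{n−1}(v) = Σ_{s(e)=v} p_n(e)·h_n(r(e)) for all v, and sup_n ‖h_n‖_{L^∞(ν_n)} ≤ ‖f‖_∞. -/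

import Mathlib

open MeasureTheory
open scoped ENNReal

section Aux14

variable {V E : ℕ → Type}
  (s : ∀ n, E n → V n) (r : ∀ n, E n → V (n+1))
  (hsne : ∀ n (v : V n), Nonempty {e : E n // s n e = v})

include hsne in
/-- Extend a sequence of edges (compatible up to `b`) forward to a fully compatible path. -/
noncomputable def extSeq14 (b : ℕ) (z : ∀ i, E i) : ∀ i, E i
  | 0 => z 0
  | (i+1) => if i + 1 ≤ b then z (i+1)
      else (Classical.choice (hsne (i+1) (r i (extSeq14 b z i)))).1

include hsne in
lemma extSeq14_eq_of_le (b : ℕ) (z : ∀ i, E i) : ∀ i, i ≤ b → extSeq14 s r hsne b z i = z i := by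
  intro i hi
  cases i with
  | zero => rfl
  | succ j => rw [extSeq14, if_pos hi]

include hsne in
lemma extSeq14_compat (b : ℕ) (z : ∀ i, E i)
    (hz : ∀ i, i < b → r i (z i) = s (i+1) (z (i+1))) :
    ∀ i, r i (extSeq14 s r hsne b z i) = s (i+1) (extSeq14 s r hsne b z (i+1)) := by
  intro i
  by_cases h : i + 1 ≤ b
  · rw [extSeq14_eq_of_le s r hsne b z (i+1) h,
      extSeq14_eq_of_le s r hsne b z i (Nat.le_of_succ_le h)]
    exact hz i h
  · rw [extSeq14]
    rw [if_neg h]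
    exact ((Classical.choice (hsne (i+1) (r i (extSeq14 s r hsne b z i)))).2).symm

include hsne in
/-- Any sequence compatible on `[0,b]` extends to a full path. -/
lemma ext14_one (b : ℕ) (z : ∀ i, E i)
    (hz : ∀ i, i < b → r i (z i) = s (i+1) (z (i+1))) :
    ∃ y : {x : (k : ℕ) → E k // ∀ k, r k (x k) = s (k+1) (x (k+1))},
      ∀ i, i ≤ b → y.1 i = z i :=
  ⟨⟨extSeq14 s r hsne b z, extSeq14_compat s r hsne b z hz⟩, extSeq14_eq_of_le s r hsne b z⟩

include hsne in
/-- Any sequence compatible on `[a,b]` extends to a full path agreeing on `[a,b]`. -/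
lemma ext14 (hrne : ∀ n (w : V (n+1)), Nonempty {e : E n // r n e = w})
    (a : ℕ) : ∀ (b : ℕ) (z : ∀ i, E i),
    (∀ i, a ≤ i → i + 1 ≤ b → r i (z i) = s (i+1) (z (i+1))) →
    ∃ y : {x : (k : ℕ) → E k // ∀ k, r k (x k) = s (k+1) (x (k+1))},
      ∀ i, a ≤ i → i ≤ b → y.1 i = z i := by
  induction a with
  | zero =>
    intro b z hz
    obtain ⟨y, hy⟩ := ext14_one s r hsne b z (fun i hi => hz i (Nat.zero_le i) hi)
    exact ⟨y, fun i _ hi => hy i hi⟩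
  | succ a ih =>
    intro b z hz
    by_cases hab : a + 1 ≤ b
    · set e := (Classical.choice (hrne a (s (a+1) (z (a+1))))).1 with he
      have hre : r a e = s (a+1) (z (a+1)) := (Classical.choice (hrne a (s (a+1) (z (a+1))))).2
      set z' := Function.update z a e with hz'
      have hz'a : ∀ i, i ≠ a → z' i = z i := fun i hi => Function.update_of_ne hi e z
      have hcomp : ∀ i, a ≤ i → i + 1 ≤ b → r i (z' i) = s (i+1) (z' (i+1)) := by
        intro i hi hib
        rcases Nat.eq_or_lt_of_le hi with h | h
        · subst h
          rw [hz'a (a+1) (by omega)]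
          have hh : z' a = e := Function.update_self a e z
          rw [hh]
          exact hre
        · rw [hz'a i (by omega), hz'a (i+1) (by omega)]
          exact hz i h hib
      obtain ⟨y, hy⟩ := ih b z' hcomp
      refine ⟨y, fun i hi hib => ?_⟩
      rw [hy i (Nat.le_of_succ_le hi) hib, hz'a i (by omega)]
    · -- interval [a+1, b] is empty or b ≤ a; just need agreement for a+1 ≤ i ≤ b, vacuous
      obtain ⟨y, _⟩ := ih b z (fun i hi hib => by omega)
      exact ⟨y, fun i hi hib => by omega⟩

end Aux14

abbrev PS14 {V E : ℕ → Type} (s : ∀ n, E n → V n) (r : ∀ n, E n → V (n+1)) : Type :=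
  {x : (k : ℕ) → E k // ∀ k, r k (x k) = s (k+1) (x (k+1))}

section Main14
set_option linter.unusedSectionVars false
variable {V E : ℕ → Type}
  [∀ n, Countable (V n)] [∀ n, Countable (E n)]
  [∀ n, MeasurableSpace (E n)] [∀ n, DiscreteMeasurableSpace (E n)]
  {s : ∀ n, E n → V n} {r : ∀ n, E n → V (n+1)}
  [∀ (n : ℕ) (v : V n), Fintype {e : E n // s n e = v}]
  [∀ (n : ℕ) (w : V (n+1)), Fintype {e : E n // r n e = w}]

local notation "X" => PS14 s r

lemma coordMeas14 (i : ℕ) : Measurable (fun x : X => x.1 i) :=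
  (measurable_pi_apply i).comp measurable_subtype_coe

lemma coordSetMeas14 (i : ℕ) (S : Set (E i)) : MeasurableSet {x : X | x.1 i ∈ S} :=
  (coordMeas14 (s := s) (r := r) i) MeasurableSet.of_discrete

lemma coordEqMeas14 (i : ℕ) (e : E i) : MeasurableSet {x : X | x.1 i = e} :=
  coordSetMeas14 i {e}

/-- positivity of ν -/
lemma nupos14 (hrne : ∀ n (w : V (n+1)), Nonempty {e : E n // r n e = w})
    (p : ∀ n, E n → ℝ) (hppos : ∀ n e, 0 < p n e)
    (ν : ∀ n, V n → ℝ) (hν₀pos : ∀ v : V 0, 0 < ν 0 v)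
    (hνrec : ∀ n (w : V (n+1)),
      ν (n+1) w = ∑ e : {e : E n // r n e = w}, p n e.1 * ν n (s n e.1)) :
    ∀ n (v : V n), 0 < ν n v := by
  intro n
  induction n with
  | zero => exact hν₀pos
  | succ n ih =>
    intro w
    rw [hνrec n w]
    haveI := hrne n w
    exact Finset.sum_pos (fun e _ => mul_pos (hppos n e.1) (ih (s n e.1)))
      Finset.univ_nonempty

/-- Measure of an interval cylinder `[n,m]` determined by a full path `z`. -/
lemma cylA14 (hsne : ∀ n (v : V n), Nonempty {e : E n // s n e = v})
    (hrne : ∀ n (w : V (n+1)), Nonempty {e : E n // r n e = w})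
    (p : ∀ n, E n → ℝ) (hppos : ∀ n e, 0 < p n e)
    (ν : ∀ n, V n → ℝ) (hν₀pos : ∀ v : V 0, 0 < ν 0 v)
    (hνrec : ∀ n (w : V (n+1)),
      ν (n+1) w = ∑ e : {e : E n // r n e = w}, p n e.1 * ν n (s n e.1))
    (μ : Measure X)
    (hμ : ∀ (z : X) (m : ℕ),
      μ {x | ∀ i < m + 1, x.1 i = z.1 i} =
        ENNReal.ofReal (ν 0 (s 0 (z.1 0))) *
        ∏ i ∈ Finset.range (m + 1), ENNReal.ofReal (p i (z.1 i)))
    (m : ℕ) :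
    ∀ n, n ≤ m → ∀ z : X,
      μ {x : X | ∀ i, n ≤ i → i ≤ m → x.1 i = z.1 i} =
        ENNReal.ofReal (ν n (s n (z.1 n))) *
          ∏ i ∈ Finset.Icc n m, ENNReal.ofReal (p i (z.1 i)) := by
  have hνpos := nupos14 hrne p hppos ν hν₀pos hνrec
  intro n
  induction n with
  | zero =>
    intro _ z
    have hset : {x : X | ∀ i, 0 ≤ i → i ≤ m → x.1 i = z.1 i}
        = {x : X | ∀ i < m + 1, x.1 i = z.1 i} := by
      ext x; constructor
      · intro hx i hi; exact hx i (Nat.zero_le i) (by omega)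
      · intro hx i _ hi; exact hx i (by omega)
    have hidx : Finset.range (m+1) = Finset.Icc 0 m := by ext i; simp
    rw [hset, hμ z m, hidx]
  | succ n ih =>
    intro hnm z
    have hn : n ≤ m := Nat.le_of_succ_le hnm
    set w := s (n+1) (z.1 (n+1)) with hw
    -- decompose according to the edge at level n
    have hdec : {x : X | ∀ i, n+1 ≤ i → i ≤ m → x.1 i = z.1 i}
        = ⋃ (e : {e : E n // r n e = w}),
            ({x : X | ∀ i, n+1 ≤ i → i ≤ m → x.1 i = z.1 i} ∩ {x : X | x.1 n = e.1}) := by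
      ext x; constructor
      · intro hx
        have hx1 : x.1 (n+1) = z.1 (n+1) := hx (n+1) le_rfl hnm
        have hre : r n (x.1 n) = w := by rw [x.2 n, hx1]
        exact Set.mem_iUnion.2 ⟨⟨x.1 n, hre⟩, hx, rfl⟩
      · intro hx
        obtain ⟨e, hx, _⟩ := Set.mem_iUnion.1 hx
        exact hx
    have hmeas : ∀ e : {e : E n // r n e = w},
        MeasurableSet ({x : X | ∀ i, n+1 ≤ i → i ≤ m → x.1 i = z.1 i} ∩ {x : X | x.1 n = e.1}) := by
      intro e
      refine MeasurableSet.inter ?_ (coordEqMeas14 n e.1)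
      have : {x : X | ∀ i, n+1 ≤ i → i ≤ m → x.1 i = z.1 i}
          = ⋂ (i : ℕ) (_ : n+1 ≤ i) (_ : i ≤ m), {x : X | x.1 i = z.1 i} := by
        ext x; simp [Set.mem_iInter]
      rw [this]
      exact MeasurableSet.iInter fun i => MeasurableSet.iInter fun _ =>
        MeasurableSet.iInter fun _ => coordEqMeas14 i (z.1 i)
    have hdisj : Pairwise (Function.onFun Disjoint (fun e : {e : E n // r n e = w} =>
        {x : X | ∀ i, n+1 ≤ i → i ≤ m → x.1 i = z.1 i} ∩ {x : X | x.1 n = e.1})) := by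
      intro e e' hee
      refine Set.disjoint_left.2 ?_
      rintro x ⟨-, hx⟩ ⟨-, hx'⟩
      exact hee (Subtype.ext (hx ▸ hx'))
    rw [hdec, measure_iUnion hdisj hmeas, tsum_fintype]
    -- compute each term
    have hterm : ∀ e : {e : E n // r n e = w},
        μ ({x : X | ∀ i, n+1 ≤ i → i ≤ m → x.1 i = z.1 i} ∩ {x : X | x.1 n = e.1})
          = ENNReal.ofReal (p n e.1 * ν n (s n e.1)) *
              ∏ i ∈ Finset.Icc (n+1) m, ENNReal.ofReal (p i (z.1 i)) := by
      intro e
      set z' := Function.update z.1 n e.1 with hz'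
      have hz'n : z' n = e.1 := Function.update_self n e.1 z.1
      have hz'o : ∀ i, i ≠ n → z' i = z.1 i := fun i hi => Function.update_of_ne hi e.1 z.1
      have hcomp : ∀ i, n ≤ i → i + 1 ≤ m → r i (z' i) = s (i+1) (z' (i+1)) := by
        intro i hi him
        rcases Nat.eq_or_lt_of_le hi with h | h
        · subst h
          rw [hz'n, hz'o (n+1) (by omega)]
          rw [e.2, hw]
        · rw [hz'o i (by omega), hz'o (i+1) (by omega)]
          exact z.2 i
      obtain ⟨y, hy⟩ := ext14 s r hsne hrne n m z' hcomp
      have hyn : y.1 n = e.1 := by rw [hy n le_rfl hn, hz'n]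
      have hyz : ∀ i, n+1 ≤ i → i ≤ m → y.1 i = z.1 i := by
        intro i hi him
        rw [hy i (by omega) him, hz'o i (by omega)]
      have hseteq : {x : X | ∀ i, n+1 ≤ i → i ≤ m → x.1 i = z.1 i} ∩ {x : X | x.1 n = e.1}
          = {x : X | ∀ i, n ≤ i → i ≤ m → x.1 i = y.1 i} := by
        ext x
        constructor
        · rintro ⟨hx1, hx2⟩ i hi him
          rcases Nat.eq_or_lt_of_le hi with h | h
          · subst h; rw [hyn]; exact hx2
          · rw [hyz i (by omega) him]; exact hx1 i (by omega) him
        · intro hx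
          refine ⟨fun i hi him => ?_, ?_⟩
          · rw [hx i (by omega) him, hyz i hi him]
          · show x.1 n = e.1
            rw [hx n le_rfl hn, hyn]
      rw [hseteq, ih hn y]
      have hsy : s n (y.1 n) = s n e.1 := by rw [hyn]
      have hprod : ∏ i ∈ Finset.Icc n m, ENNReal.ofReal (p i (y.1 i))
          = ENNReal.ofReal (p n e.1) * ∏ i ∈ Finset.Icc (n+1) m, ENNReal.ofReal (p i (z.1 i)) := by
        rw [Finset.Icc_eq_cons_Ioc hn, Finset.prod_cons, ← Finset.Icc_add_one_left_eq_Ioc, hyn]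
        congr 1
        refine Finset.prod_congr rfl fun i hi => ?_
        simp only [Finset.mem_Icc] at hi
        rw [hyz i hi.1 hi.2]
      rw [hsy, hprod, ENNReal.ofReal_mul (le_of_lt (hppos n e.1))]
      ring
    calc (∑ e : {e : E n // r n e = w},
          μ ({x : X | ∀ i, n+1 ≤ i → i ≤ m → x.1 i = z.1 i} ∩ {x : X | x.1 n = e.1}))
        = ∑ e : {e : E n // r n e = w},
            ENNReal.ofReal (p n e.1 * ν n (s n e.1)) *
              ∏ i ∈ Finset.Icc (n+1) m, ENNReal.ofReal (p i (z.1 i)) := by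
          exact Finset.sum_congr rfl fun e _ => hterm e
      _ = (∑ e : {e : E n // r n e = w}, ENNReal.ofReal (p n e.1 * ν n (s n e.1))) *
              ∏ i ∈ Finset.Icc (n+1) m, ENNReal.ofReal (p i (z.1 i)) := by
          rw [Finset.sum_mul]
      _ = ENNReal.ofReal (ν (n+1) w) *
              ∏ i ∈ Finset.Icc (n+1) m, ENNReal.ofReal (p i (z.1 i)) := by
          congr 1
          rw [← ENNReal.ofReal_sum_of_nonneg (fun e _ =>
            le_of_lt (mul_pos (hppos n e.1) (hνpos n (s n e.1)))), hνrec n w]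
      _ = _ := rfl

lemma Ene14 (rr : ∀ n, E n → V (n+1)) (hsne : ∀ n (v : V n), Nonempty {e : E n // s n e = v})
    (hV0 : Nonempty (V 0)) : ∀ n, Nonempty (E n) := by
  intro n
  induction n with
  | zero => exact ⟨(Classical.choice (hsne 0 (Classical.choice hV0))).1⟩
  | succ n ih =>
    obtain ⟨e⟩ := ih
    exact ⟨(Classical.choice (hsne (n+1) (rr n e))).1⟩

/-- Measure of a single-edge cylinder. -/
lemma edgeCyl14 (hsne : ∀ n (v : V n), Nonempty {e : E n // s n e = v})
    (hrne : ∀ n (w : V (n+1)), Nonempty {e : E n // r n e = w})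
    (hV0 : Nonempty (V 0))
    (p : ∀ n, E n → ℝ) (hppos : ∀ n e, 0 < p n e)
    (ν : ∀ n, V n → ℝ) (hν₀pos : ∀ v : V 0, 0 < ν 0 v)
    (hνrec : ∀ n (w : V (n+1)),
      ν (n+1) w = ∑ e : {e : E n // r n e = w}, p n e.1 * ν n (s n e.1))
    (μ : Measure X)
    (hμ : ∀ (z : X) (m : ℕ),
      μ {x | ∀ i < m + 1, x.1 i = z.1 i} =
        ENNReal.ofReal (ν 0 (s 0 (z.1 0))) *
        ∏ i ∈ Finset.range (m + 1), ENNReal.ofReal (p i (z.1 i)))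
    (n : ℕ) (e : E n) :
    μ {x : X | x.1 n = e} = ENNReal.ofReal (ν n (s n e)) * ENNReal.ofReal (p n e) := by
  set z : ∀ i, E i := Function.update (fun i => Classical.choice (Ene14 r hsne hV0 i)) n e with hz
  have hzn : z n = e := Function.update_self n e _
  obtain ⟨y, hy⟩ := ext14 s r hsne hrne n n z (fun i hi him => by omega)
  have hyn : y.1 n = e := by rw [hy n le_rfl le_rfl, hzn]
  have hseteq : {x : X | x.1 n = e} = {x : X | ∀ i, n ≤ i → i ≤ n → x.1 i = y.1 i} := by
    ext x
    constructor
    · intro hx i hi him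
      have : i = n := le_antisymm him hi
      subst this
      rw [hyn]; exact hx
    · intro hx
      show x.1 n = e
      rw [hx n le_rfl le_rfl, hyn]
  rw [hseteq, cylA14 hsne hrne p hppos ν hν₀pos hνrec μ hμ n n le_rfl y, hyn,
    Finset.Icc_self, Finset.prod_singleton, hyn]

/-- Measure of a vertex cylinder. -/
lemma vertCyl14 (hsne : ∀ n (v : V n), Nonempty {e : E n // s n e = v})
    (hrne : ∀ n (w : V (n+1)), Nonempty {e : E n // r n e = w})
    (hV0 : Nonempty (V 0))
    (p : ∀ n, E n → ℝ) (hppos : ∀ n e, 0 < p n e)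
    (hpsum : ∀ n (v : V n), ∑ e : {e : E n // s n e = v}, p n e.1 = 1)
    (ν : ∀ n, V n → ℝ) (hν₀pos : ∀ v : V 0, 0 < ν 0 v)
    (hνrec : ∀ n (w : V (n+1)),
      ν (n+1) w = ∑ e : {e : E n // r n e = w}, p n e.1 * ν n (s n e.1))
    (μ : Measure X)
    (hμ : ∀ (z : X) (m : ℕ),
      μ {x | ∀ i < m + 1, x.1 i = z.1 i} =
        ENNReal.ofReal (ν 0 (s 0 (z.1 0))) *
        ∏ i ∈ Finset.range (m + 1), ENNReal.ofReal (p i (z.1 i)))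
    (n : ℕ) (v : V n) :
    μ {x : X | s n (x.1 n) = v} = ENNReal.ofReal (ν n v) := by
  have hdec : {x : X | s n (x.1 n) = v}
      = ⋃ (e : {e : E n // s n e = v}), {x : X | x.1 n = e.1} := by
    ext x
    constructor
    · intro hx; exact Set.mem_iUnion.2 ⟨⟨x.1 n, hx⟩, rfl⟩
    · intro hx
      obtain ⟨e, hx⟩ := Set.mem_iUnion.1 hx
      show s n (x.1 n) = v
      rw [show x.1 n = e.1 from hx]; exact e.2
  have hdisj : Pairwise (Function.onFun Disjoint
      (fun e : {e : E n // s n e = v} => {x : X | x.1 n = e.1})) := by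
    intro e e' hee
    refine Set.disjoint_left.2 ?_
    intro x hx hx'
    exact hee (Subtype.ext ((hx : x.1 n = e.1) ▸ (hx' : x.1 n = e'.1)))
  rw [hdec, measure_iUnion hdisj (fun e => coordEqMeas14 n e.1), tsum_fintype]
  calc (∑ e : {e : E n // s n e = v}, μ {x : X | x.1 n = e.1})
      = ∑ e : {e : E n // s n e = v}, ENNReal.ofReal (ν n v * p n e.1) := by
        refine Finset.sum_congr rfl fun e _ => ?_
        rw [edgeCyl14 hsne hrne hV0 p hppos ν hν₀pos hνrec μ hμ n e.1, e.2,
          ENNReal.ofReal_mul (le_of_lt (nupos14 hrne p hppos ν hν₀pos hνrec n v))]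
    _ = ENNReal.ofReal (∑ e : {e : E n // s n e = v}, ν n v * p n e.1) := by
        rw [ENNReal.ofReal_sum_of_nonneg (fun e _ =>
          le_of_lt (mul_pos (nupos14 hrne p hppos ν hν₀pos hνrec n v) (hppos n e.1)))]
    _ = ENNReal.ofReal (ν n v) := by
        rw [← Finset.mul_sum, hpsum n v, mul_one]

/-- The interval cylinders form a π-system. -/
lemma piCyl14 : IsPiSystem
    {B : Set X | ∃ (m : ℕ) (z : ∀ i, E i), B = {x : X | ∀ i, i ≤ m → x.1 i = z i}} := by
  rintro B1 ⟨m1, z1, rfl⟩ B2 ⟨m2, z2, rfl⟩ hne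
  obtain ⟨x0, hx01, hx02⟩ := hne
  rcases le_total m1 m2 with h | h
  · refine ⟨m2, z2, ?_⟩
    apply Set.Subset.antisymm (Set.inter_subset_right)
    intro x hx
    refine ⟨fun i hi => ?_, hx⟩
    rw [hx i (le_trans hi h), ← hx02 i (le_trans hi h), hx01 i hi]
  · refine ⟨m1, z1, ?_⟩
    apply Set.Subset.antisymm (Set.inter_subset_left)
    intro x hx
    refine ⟨hx, fun i hi => ?_⟩
    rw [hx i (le_trans hi h), ← hx01 i (le_trans hi h), hx02 i hi]

/-- The interval cylinders generate the σ-algebra on the path space. -/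
lemma genCyl14 (hne : ∀ i, Nonempty (E i)) :
    (inferInstance : MeasurableSpace X) = MeasurableSpace.generateFrom
      {B : Set X | ∃ (m : ℕ) (z : ∀ i, E i), B = {x : X | ∀ i, i ≤ m → x.1 i = z i}} := by
  set P : Set (Set X) :=
    {B : Set X | ∃ (m : ℕ) (z : ∀ i, E i), B = {x : X | ∀ i, i ≤ m → x.1 i = z i}} with hP
  have hone : ∀ (i : ℕ) (e : E i),
      MeasurableSet[MeasurableSpace.generateFrom P] {x : X | x.1 i = e} := by
    intro i e
    have hrep : {x : X | x.1 i = e}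
        = ⋃ (t : {t : (j : Fin (i+1)) → E j // t ⟨i, Nat.lt_succ_self i⟩ = e}),
            {x : X | ∀ j, j ≤ i →
              x.1 j = (fun j' => if h : j' < i + 1 then t.1 ⟨j', h⟩
                else Classical.choice (hne j')) j} := by
      ext x
      constructor
      · intro hx
        refine Set.mem_iUnion.2 ⟨⟨fun j => x.1 j.1, hx⟩, fun j hj => ?_⟩
        show x.1 j = if h : j < i + 1 then x.1 j else Classical.choice (hne j)
        rw [dif_pos (Nat.lt_succ_of_le hj)]
      · intro hx
        obtain ⟨t, hx⟩ := Set.mem_iUnion.1 hx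
        have h0 := hx i le_rfl
        have h1 : (fun j' => if h : j' < i + 1 then t.1 ⟨j', h⟩
            else Classical.choice (hne j')) i = t.1 ⟨i, Nat.lt_succ_self i⟩ := by
          show (if h : i < i + 1 then t.1 ⟨i, h⟩ else Classical.choice (hne i)) = _
          rw [dif_pos (Nat.lt_succ_self i)]
        show x.1 i = e
        exact h0.trans (h1.trans t.2)
    rw [hrep]
    exact MeasurableSet.iUnion fun t =>
      MeasurableSpace.measurableSet_generateFrom ⟨i, _, rfl⟩
  apply le_antisymm
  · have hval : @Measurable X (∀ k, E k) (MeasurableSpace.generateFrom P) _ Subtype.val :=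
      (@measurable_pi_iff X ℕ E (MeasurableSpace.generateFrom P) _ Subtype.val).mpr
        (fun i => @measurable_to_countable (E i) X _ _ (MeasurableSpace.generateFrom P)
          (fun x => x.1 i) (fun y => hone i (y.1 i)))
    exact measurable_iff_comap_le.mp hval
  · apply MeasurableSpace.generateFrom_le
    rintro B ⟨m, z, rfl⟩
    have : {x : X | ∀ i, i ≤ m → x.1 i = z i}
        = ⋂ (i : ℕ) (_ : i ≤ m), {x : X | x.1 i = z i} := by
      ext x; simp [Set.mem_iInter]
    rw [this]
    exact MeasurableSet.iInter fun i => MeasurableSet.iInter fun _ => coordEqMeas14 i (z i)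

lemma cylMeas14 (m : ℕ) (z : ∀ i, E i) :
    MeasurableSet {x : X | ∀ i, i ≤ m → x.1 i = z i} := by
  have : {x : X | ∀ i, i ≤ m → x.1 i = z i}
      = ⋂ (i : ℕ) (_ : i ≤ m), {x : X | x.1 i = z i} := by
    ext x; simp [Set.mem_iInter]
  rw [this]
  exact MeasurableSet.iInter fun i => MeasurableSet.iInter fun _ => coordEqMeas14 i (z i)

/-- The key lemma: by tail invariance, the integral of `f` over a single-edge
cylinder is proportional to the integral over the target-vertex cylinder. -/
lemma key14 (hsne : ∀ n (v : V n), Nonempty {e : E n // s n e = v})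
    (hrne : ∀ n (w : V (n+1)), Nonempty {e : E n // r n e = w})
    (hV0 : Nonempty (V 0))
    (p : ∀ n, E n → ℝ) (hppos : ∀ n e, 0 < p n e)
    (hpsum : ∀ n (v : V n), ∑ e : {e : E n // s n e = v}, p n e.1 = 1)
    (ν : ∀ n, V n → ℝ) (hν₀pos : ∀ v : V 0, 0 < ν 0 v)
    (hνrec : ∀ n (w : V (n+1)),
      ν (n+1) w = ∑ e : {e : E n // r n e = w}, p n e.1 * ν n (s n e.1))
    (μ : Measure X) [IsProbabilityMeasure μ]
    (hμ : ∀ (z : X) (m : ℕ),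
      μ {x | ∀ i < m + 1, x.1 i = z.1 i} =
        ENNReal.ofReal (ν 0 (s 0 (z.1 0))) *
        ∏ i ∈ Finset.range (m + 1), ENNReal.ofReal (p i (z.1 i)))
    (f : X → ℝ) (hfmeas : Measurable f)
    (hfinv : ∀ x y : X, (∃ N, ∀ i, N ≤ i → x.1 i = y.1 i) → f x = f y)
    (n : ℕ) (e : E n) :
    ∫⁻ x in {x : X | x.1 n = e}, ENNReal.ofReal (f x) ∂μ
      = ENNReal.ofReal (p n e * ν n (s n e) / ν (n+1) (r n e)) *
        ∫⁻ x in {x : X | s (n+1) (x.1 (n+1)) = r n e}, ENNReal.ofReal (f x) ∂μ := by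
  have hνpos := nupos14 hrne p hppos ν hν₀pos hνrec
  have hEne := Ene14 r hsne hV0
  set w := r n e with hwdef
  set A1 := {x : X | x.1 n = e} with hA1def
  set A2 := {x : X | s (n+1) (x.1 (n+1)) = w} with hA2def
  set c := p n e * ν n (s n e) / ν (n+1) w with hcdef
  have hA1m : MeasurableSet A1 := coordEqMeas14 n e
  have hA2m : MeasurableSet A2 := coordSetMeas14 (n+1) {e' | s (n+1) e' = w}
  have hμA1 : μ A1 = ENNReal.ofReal (ν n (s n e)) * ENNReal.ofReal (p n e) :=
    edgeCyl14 hsne hrne hV0 p hppos ν hν₀pos hνrec μ hμ n e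
  have hμA2 : μ A2 = ENNReal.ofReal (ν (n+1) w) :=
    vertCyl14 hsne hrne hV0 p hppos hpsum ν hν₀pos hνrec μ hμ (n+1) w
  have hcnn : 0 ≤ c :=
    div_nonneg (mul_nonneg (le_of_lt (hppos n e)) (le_of_lt (hνpos n (s n e))))
      (le_of_lt (hνpos (n+1) w))
  have hscal : ENNReal.ofReal (ν n (s n e)) * ENNReal.ofReal (p n e)
      = ENNReal.ofReal c * ENNReal.ofReal (ν (n+1) w) := by
    rw [← ENNReal.ofReal_mul hcnn, ← ENNReal.ofReal_mul (le_of_lt (hνpos n (s n e)))]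
    congr 1
    rw [hcdef, div_mul_cancel₀ _ (ne_of_gt (hνpos (n+1) w))]
    ring
  -- canonical path into each vertex of V (n+1)
  have hQex : ∀ w' : V (n+1), ∃ y : X, r n (y.1 n) = w' := by
    intro w'
    obtain ⟨e0, he0⟩ := Classical.choice (hrne n w')
    set z : ∀ i, E i := Function.update (fun i => Classical.choice (hEne i)) n e0 with hz
    obtain ⟨y, hy⟩ := ext14 s r hsne hrne n n z (fun i hi him => by omega)
    refine ⟨y, ?_⟩
    rw [hy n le_rfl le_rfl, hz, Function.update_self]
    exact he0
  choose Qp hQp using hQex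
  -- the prefix-replacement map
  have hΦc : ∀ x : X, ∀ k, r k (if k ≤ n then (Qp (r n (x.1 n))).1 k else x.1 k)
      = s (k+1) (if k+1 ≤ n then (Qp (r n (x.1 n))).1 (k+1) else x.1 (k+1)) := by
    intro x k
    by_cases hk1 : k + 1 ≤ n
    · rw [if_pos hk1, if_pos (Nat.le_of_succ_le hk1)]
      exact (Qp (r n (x.1 n))).2 k
    · by_cases hk2 : k ≤ n
      · have hkn : k = n := by omega
        subst hkn
        rw [if_pos le_rfl, if_neg hk1]
        rw [hQp (r k (x.1 k))]
        exact x.2 k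
      · rw [if_neg hk2, if_neg hk1]
        exact x.2 k
  set Φ : X → X := fun x =>
    ⟨fun i => if i ≤ n then (Qp (r n (x.1 n))).1 i else x.1 i, hΦc x⟩ with hΦdef
  have hΦcoord : ∀ (x : X) (i : ℕ),
      (Φ x).1 i = if i ≤ n then (Qp (r n (x.1 n))).1 i else x.1 i := fun x i => rfl
  have hΦ : Measurable Φ := by
    apply Measurable.subtype_mk
    apply measurable_pi_iff.mpr
    intro i
    by_cases hi : i ≤ n
    · have heq : (fun x : X => if i ≤ n then (Qp (r n (x.1 n))).1 i else x.1 i)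
          = (fun e' : E n => (Qp (r n e')).1 i) ∘ (fun x : X => x.1 n) := by
        funext x; rw [if_pos hi]; rfl
      rw [heq]
      exact Measurable.comp (fun t _ => MeasurableSet.of_discrete) (coordMeas14 n)
    · have heq : (fun x : X => if i ≤ n then (Qp (r n (x.1 n))).1 i else x.1 i)
          = fun x : X => x.1 i := by
        funext x; rw [if_neg hi]
      rw [heq]
      exact coordMeas14 i
  have hfΦ : ∀ x, f (Φ x) = f x := by
    intro x
    refine hfinv (Φ x) x ⟨n+1, fun i hi => ?_⟩
    rw [hΦcoord, if_neg (by omega)]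
  -- the main measure computation on cylinders
  have hmain : ∀ (m : ℕ) (z : ∀ i, E i),
      μ (Φ ⁻¹' {x : X | ∀ i, i ≤ m → x.1 i = z i} ∩ A1)
        = ENNReal.ofReal c * μ (Φ ⁻¹' {x : X | ∀ i, i ≤ m → x.1 i = z i} ∩ A2) := by
    intro m z
    by_cases hc1 : ∀ i, i ≤ m → i ≤ n → (Qp w).1 i = z i
    · by_cases hnm : m ≤ n
      · -- the cylinder constraint only concerns the replaced prefix
        have h1 : Φ ⁻¹' {x : X | ∀ i, i ≤ m → x.1 i = z i} ∩ A1 = A1 := by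
          apply Set.inter_eq_right.mpr
          intro x hxA
          intro i him
          have hin : i ≤ n := le_trans him hnm
          rw [hΦcoord, if_pos hin, show r n (x.1 n) = w by rw [(hxA : x.1 n = e)]]
          exact hc1 i him hin
        have h2 : Φ ⁻¹' {x : X | ∀ i, i ≤ m → x.1 i = z i} ∩ A2 = A2 := by
          apply Set.inter_eq_right.mpr
          intro x hxA
          intro i him
          have hin : i ≤ n := le_trans him hnm
          rw [hΦcoord, if_pos hin, show r n (x.1 n) = w by rw [x.2 n]; exact hxA]
          exact hc1 i him hin
        rw [h1, h2, hμA1, hμA2]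
        exact hscal
      · push_neg at hnm
        have hnm' : n + 1 ≤ m := hnm
        by_cases hcomp : (∀ i, n+1 ≤ i → i+1 ≤ m → r i (z i) = s (i+1) (z (i+1)))
            ∧ r n e = s (n+1) (z (n+1))
        · obtain ⟨hzc, hre⟩ := hcomp
          -- LHS as an interval cylinder
          set z1 : ∀ i, E i := Function.update z n e with hz1def
          have hz1n : z1 n = e := Function.update_self n e z
          have hz1o : ∀ i, i ≠ n → z1 i = z i := fun i hi => Function.update_of_ne hi e z
          have hcomp1 : ∀ i, n ≤ i → i + 1 ≤ m → r i (z1 i) = s (i+1) (z1 (i+1)) := by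
            intro i hi him
            rcases Nat.eq_or_lt_of_le hi with h | h
            · subst h
              rw [hz1n, hz1o (n+1) (by omega)]
              exact hre
            · rw [hz1o i (by omega), hz1o (i+1) (by omega)]
              exact hzc i h him
          obtain ⟨y1, hy1⟩ := ext14 s r hsne hrne n m z1 hcomp1
          have hy1n : y1.1 n = e := by rw [hy1 n le_rfl (le_of_lt hnm), hz1n]
          have hy1z : ∀ i, n + 1 ≤ i → i ≤ m → y1.1 i = z i := by
            intro i hi him
            rw [hy1 i (by omega) him, hz1o i (by omega)]
          have hs1 : Φ ⁻¹' {x : X | ∀ i, i ≤ m → x.1 i = z i} ∩ A1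
              = {x : X | ∀ i, n ≤ i → i ≤ m → x.1 i = y1.1 i} := by
            ext x
            constructor
            · rintro ⟨hxB, hxA⟩ i hi him
              rcases Nat.eq_or_lt_of_le hi with h | h
              · subst h
                rw [hy1n]
                exact hxA
              · have := hxB i him
                rw [hΦcoord, if_neg (by omega)] at this
                rw [this, hy1z i (by omega) him]
            · intro hx
              have hxA : x.1 n = e := by
                rw [hx n le_rfl (le_of_lt hnm), hy1n]
              refine ⟨fun i him => ?_, hxA⟩
              rw [hΦcoord]
              by_cases hin : i ≤ n
              · rw [if_pos hin, show r n (x.1 n) = w by rw [hxA]]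
                exact hc1 i him hin
              · rw [if_neg hin, hx i (by omega) him, hy1z i (by omega) him]
          -- RHS as an interval cylinder
          obtain ⟨y2, hy2⟩ := ext14 s r hsne hrne (n+1) m z (fun i hi him => hzc i hi him)
          have hy2z : ∀ i, n + 1 ≤ i → i ≤ m → y2.1 i = z i := hy2
          have hs2 : Φ ⁻¹' {x : X | ∀ i, i ≤ m → x.1 i = z i} ∩ A2
              = {x : X | ∀ i, n + 1 ≤ i → i ≤ m → x.1 i = y2.1 i} := by
            ext x
            constructor
            · rintro ⟨hxB, hxA⟩ i hi him
              have := hxB i him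
              rw [hΦcoord, if_neg (by omega)] at this
              rw [this, hy2z i hi him]
            · intro hx
              have hx1 : x.1 (n+1) = z (n+1) := by
                rw [hx (n+1) le_rfl hnm', hy2z (n+1) le_rfl hnm']
              have hxA : s (n+1) (x.1 (n+1)) = w := by
                rw [hx1, ← hre]
              refine ⟨fun i him => ?_, hxA⟩
              rw [hΦcoord]
              by_cases hin : i ≤ n
              · rw [if_pos hin, show r n (x.1 n) = w by rw [x.2 n]; exact hxA]
                exact hc1 i him hin
              · rw [if_neg hin, hx i (by omega) him, hy2z i (by omega) him]
          rw [hs1, hs2,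
            cylA14 hsne hrne p hppos ν hν₀pos hνrec μ hμ m n (le_of_lt hnm) y1,
            cylA14 hsne hrne p hppos ν hν₀pos hνrec μ hμ m (n+1) hnm' y2]
          have hsy1 : s n (y1.1 n) = s n e := by rw [hy1n]
          have hsy2 : s (n+1) (y2.1 (n+1)) = w := by
            rw [hy2z (n+1) le_rfl hnm', ← hre]
          have hprod1 : ∏ i ∈ Finset.Icc n m, ENNReal.ofReal (p i (y1.1 i))
              = ENNReal.ofReal (p n e) *
                  ∏ i ∈ Finset.Icc (n+1) m, ENNReal.ofReal (p i (y2.1 i)) := by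
            rw [Finset.Icc_eq_cons_Ioc (le_of_lt hnm), Finset.prod_cons,
              ← Finset.Icc_add_one_left_eq_Ioc, hy1n]
            congr 1
            refine Finset.prod_congr rfl fun i hi => ?_
            simp only [Finset.mem_Icc] at hi
            rw [hy1z i hi.1 hi.2, hy2z i hi.1 hi.2]
          rw [hsy1, hsy2, hprod1, ← mul_assoc, ← mul_assoc, hscal]
        · -- incompatible constraints: both sides are empty
          have h1 : Φ ⁻¹' {x : X | ∀ i, i ≤ m → x.1 i = z i} ∩ A1 = ∅ := by
            rw [Set.eq_empty_iff_forall_notMem]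
            rintro x ⟨hxB, hxA⟩
            apply hcomp
            have hxz : ∀ i, n + 1 ≤ i → i ≤ m → x.1 i = z i := by
              intro i hi him
              have := hxB i him
              rw [hΦcoord, if_neg (by omega)] at this
              exact this
            constructor
            · intro i hi him
              rw [← hxz i hi (by omega), ← hxz (i+1) (by omega) him]
              exact x.2 i
            · rw [← hxz (n+1) le_rfl hnm', ← (hxA : x.1 n = e)]
              exact x.2 n
          have h2 : Φ ⁻¹' {x : X | ∀ i, i ≤ m → x.1 i = z i} ∩ A2 = ∅ := by
            rw [Set.eq_empty_iff_forall_notMem]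
            rintro x ⟨hxB, hxA⟩
            apply hcomp
            have hxz : ∀ i, n + 1 ≤ i → i ≤ m → x.1 i = z i := by
              intro i hi him
              have := hxB i him
              rw [hΦcoord, if_neg (by omega)] at this
              exact this
            constructor
            · intro i hi him
              rw [← hxz i hi (by omega), ← hxz (i+1) (by omega) him]
              exact x.2 i
            · rw [← hxz (n+1) le_rfl hnm']
              exact (hxA : s (n+1) (x.1 (n+1)) = w).symm
          rw [h1, h2]
          simp
    · -- prefix constraint incompatible with the canonical prefix: both sides empty
      have h1 : Φ ⁻¹' {x : X | ∀ i, i ≤ m → x.1 i = z i} ∩ A1 = ∅ := by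
        rw [Set.eq_empty_iff_forall_notMem]
        rintro x ⟨hxB, hxA⟩
        apply hc1
        intro i him hin
        have := hxB i him
        rw [hΦcoord, if_pos hin, show r n (x.1 n) = w by rw [(hxA : x.1 n = e)]] at this
        exact this
      have h2 : Φ ⁻¹' {x : X | ∀ i, i ≤ m → x.1 i = z i} ∩ A2 = ∅ := by
        rw [Set.eq_empty_iff_forall_notMem]
        rintro x ⟨hxB, hxA⟩
        apply hc1
        intro i him hin
        have := hxB i him
        rw [hΦcoord, if_pos hin,
          show r n (x.1 n) = w by rw [x.2 n]; exact hxA] at this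
        exact this
      rw [h1, h2]
      simp
  -- equality of the pushforward measures
  have hmapeq : Measure.map Φ (μ.restrict A1)
      = ENNReal.ofReal c • Measure.map Φ (μ.restrict A2) := by
    refine ext_of_generate_finite _ (genCyl14 hEne) piCyl14 ?_ ?_
    · rintro B ⟨m, z, rfl⟩
      rw [Measure.smul_apply, smul_eq_mul, Measure.map_apply hΦ (cylMeas14 m z),
        Measure.map_apply hΦ (cylMeas14 m z),
        Measure.restrict_apply (hΦ (cylMeas14 m z)),
        Measure.restrict_apply (hΦ (cylMeas14 m z))]
      exact hmain m z
    · rw [Measure.smul_apply, smul_eq_mul, Measure.map_apply hΦ MeasurableSet.univ,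
        Measure.map_apply hΦ MeasurableSet.univ, Set.preimage_univ,
        Measure.restrict_apply MeasurableSet.univ, Measure.restrict_apply MeasurableSet.univ,
        Set.univ_inter, Set.univ_inter, hμA1, hμA2]
      exact hscal
  -- conclude via the change of variables formula
  calc ∫⁻ x in A1, ENNReal.ofReal (f x) ∂μ
      = ∫⁻ x, ENNReal.ofReal (f (Φ x)) ∂(μ.restrict A1) := by
        refine lintegral_congr fun x => ?_
        rw [hfΦ]
    _ = ∫⁻ y, ENNReal.ofReal (f y) ∂(Measure.map Φ (μ.restrict A1)) :=
        (lintegral_map hfmeas.ennreal_ofReal hΦ).symm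
    _ = ENNReal.ofReal c * ∫⁻ y, ENNReal.ofReal (f y) ∂(Measure.map Φ (μ.restrict A2)) := by
        rw [hmapeq, lintegral_smul_measure, smul_eq_mul]
    _ = ENNReal.ofReal c * ∫⁻ x, ENNReal.ofReal (f (Φ x)) ∂(μ.restrict A2) := by
        rw [lintegral_map hfmeas.ennreal_ofReal hΦ]
    _ = ENNReal.ofReal c * ∫⁻ x in A2, ENNReal.ofReal (f x) ∂μ := by
        congr 1
        refine lintegral_congr fun x => ?_
        rw [hfΦ]

end Main14



open MeasureTheory
open scoped ENNReal

/-- If `f` is a bounded nonnegative tail-invariant function on the path space of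
a full-support random walk on a Bratteli diagram, then the densities `h_n` of
the pushforwards of `f·μ` under the level maps (i.e. `h_n ν_n = (r_n)_*(fμ)`)
form a bounded harmonic sequence: `h_n(v) = Σ_{s(e)=v} p(e) h_{n+1}(r(e))` and
`0 ≤ h_n ≤ ‖f‖_∞`. -/
theorem stmt14 (V E : ℕ → Type)
    [∀ n, Countable (V n)] [∀ n, Countable (E n)]
    [∀ n, MeasurableSpace (E n)] [∀ n, DiscreteMeasurableSpace (E n)]
    (s : ∀ n, E n → V n) (r : ∀ n, E n → V (n+1))
    [∀ (n : ℕ) (v : V n), Fintype {e : E n // s n e = v}]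
    [∀ (n : ℕ) (w : V (n+1)), Fintype {e : E n // r n e = w}]
    (hsne : ∀ n (v : V n), Nonempty {e : E n // s n e = v})
    (hrne : ∀ n (w : V (n+1)), Nonempty {e : E n // r n e = w})
    (p : ∀ n, E n → ℝ) (hppos : ∀ n e, 0 < p n e)
    (hpsum : ∀ n (v : V n), ∑ e : {e : E n // s n e = v}, p n e.1 = 1)
    (ν : ∀ n, V n → ℝ) (hν₀pos : ∀ v : V 0, 0 < ν 0 v)
    (hν₀sum : ∑' v : V 0, ν 0 v = 1)
    (hνrec : ∀ n (w : V (n+1)),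
      ν (n+1) w = ∑ e : {e : E n // r n e = w}, p n e.1 * ν n (s n e.1))
    (μ : Measure {x : (k : ℕ) → E k // ∀ k, r k (x k) = s (k+1) (x (k+1))})
    [IsProbabilityMeasure μ]
    (hμ : ∀ (z : {x : (k : ℕ) → E k // ∀ k, r k (x k) = s (k+1) (x (k+1))}) (m : ℕ),
      μ {x | ∀ i < m + 1, x.1 i = z.1 i} =
        ENNReal.ofReal (ν 0 (s 0 (z.1 0))) *
        ∏ i ∈ Finset.range (m + 1), ENNReal.ofReal (p i (z.1 i)))
    (f : {x : (k : ℕ) → E k // ∀ k, r k (x k) = s (k+1) (x (k+1))} → ℝ)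
    (hfmeas : Measurable f) (hfnonneg : ∀ x, 0 ≤ f x)
    (C : ℝ) (hfbdd : ∀ x, f x ≤ C)
    (hfinv : ∀ x y, (∃ N, ∀ i, N ≤ i → x.1 i = y.1 i) → f x = f y) :
    ∃ h : (n : ℕ) → V n → ℝ,
      -- h_n is the density of (r_n)_*(fμ) with respect to ν_n
      (∀ v : V 0, ENNReal.ofReal (h 0 v * ν 0 v) =
        ∫⁻ x in {x | s 0 (x.1 0) = v}, ENNReal.ofReal (f x) ∂μ) ∧
      (∀ n (w : V (n+1)), ENNReal.ofReal (h (n+1) w * ν (n+1) w) =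
        ∫⁻ x in {x | r n (x.1 n) = w}, ENNReal.ofReal (f x) ∂μ) ∧
      -- the sequence (h_n) is harmonic
      (∀ n (v : V n),
        h n v = ∑ e : {e : E n // s n e = v}, p n e.1 * h (n+1) (r n e.1)) ∧
      -- and bounded by ‖f‖_∞
      (∀ n (v : V n), 0 ≤ h n v ∧ h n v ≤ C) := by
  have hνpos := nupos14 hrne p hppos ν hν₀pos hνrec
  have hV0 : Nonempty (V 0) := by
    by_contra hc
    rw [not_nonempty_iff] at hc
    rw [tsum_empty] at hν₀sum
    exact one_ne_zero hν₀sum.symm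
  have hEne := Ene14 r hsne hV0
  obtain ⟨x0, -⟩ := ext14 s r hsne hrne 0 0 (fun i => Classical.choice (hEne i))
    (fun i hi him => by omega)
  have hC0 : 0 ≤ C := le_trans (hfnonneg x0) (hfbdd x0)
  -- the integrals over vertex cylinders
  set I : ∀ n, V n → ℝ≥0∞ := fun n v =>
    ∫⁻ x in {x : PS14 s r | s n (x.1 n) = v}, ENNReal.ofReal (f x) ∂μ with hIdef
  have hTmeas : ∀ n (v : V n), MeasurableSet {x : PS14 s r | s n (x.1 n) = v} :=
    fun n v => coordSetMeas14 n {e | s n e = v}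
  have hIle : ∀ n (v : V n), I n v ≤ ENNReal.ofReal (C * ν n v) := by
    intro n v
    calc I n v ≤ ∫⁻ _ in {x : PS14 s r | s n (x.1 n) = v}, ENNReal.ofReal C ∂μ :=
          lintegral_mono fun x => ENNReal.ofReal_le_ofReal (hfbdd x)
      _ = ENNReal.ofReal C * μ {x : PS14 s r | s n (x.1 n) = v} :=
          setLIntegral_const _ _
      _ = ENNReal.ofReal C * ENNReal.ofReal (ν n v) := by
          rw [vertCyl14 hsne hrne hV0 p hppos hpsum ν hν₀pos hνrec μ hμ n v]
      _ = ENNReal.ofReal (C * ν n v) := (ENNReal.ofReal_mul hC0).symm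
  have hIfin : ∀ n (v : V n), I n v ≠ ⊤ :=
    fun n v => (lt_of_le_of_lt (hIle n v) ENNReal.ofReal_lt_top).ne
  -- the harmonicity identity at the level of lintegrals
  have hIkey : ∀ n (v : V n),
      I n v = ∑ e : {e : E n // s n e = v},
        ENNReal.ofReal (p n e.1 * ν n v / ν (n+1) (r n e.1)) * I (n+1) (r n e.1) := by
    intro n v
    have hdec : {x : PS14 s r | s n (x.1 n) = v}
        = ⋃ (e : {e : E n // s n e = v}), {x : PS14 s r | x.1 n = e.1} := by
      ext x
      constructor
      · intro hx; exact Set.mem_iUnion.2 ⟨⟨x.1 n, hx⟩, rfl⟩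
      · intro hx
        obtain ⟨e, hx⟩ := Set.mem_iUnion.1 hx
        show s n (x.1 n) = v
        rw [show x.1 n = e.1 from hx]; exact e.2
    have hdisj : Pairwise (Function.onFun Disjoint
        (fun e : {e : E n // s n e = v} => {x : PS14 s r | x.1 n = e.1})) := by
      intro e e' hee
      refine Set.disjoint_left.2 ?_
      intro x hx hx'
      exact hee (Subtype.ext ((hx : x.1 n = e.1) ▸ (hx' : x.1 n = e'.1)))
    rw [hIdef]
    simp only
    rw [hdec, lintegral_iUnion (fun e : {e : E n // s n e = v} => coordEqMeas14 n e.1) hdisj, tsum_fintype]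
    refine Finset.sum_congr rfl fun e _ => ?_
    have hkey := key14 hsne hrne hV0 p hppos hpsum ν hν₀pos hνrec μ hμ f hfmeas hfinv n e.1
    rw [hkey, e.2]
  -- the sequence h
  refine ⟨fun n v => (I n v).toReal / ν n v, ?_, ?_, ?_, ?_⟩
  · intro v
    rw [div_mul_cancel₀ _ (ne_of_gt (hνpos 0 v)), ENNReal.ofReal_toReal (hIfin 0 v)]
  · intro n w
    have hset : {x : PS14 s r | r n (x.1 n) = w}
        = {x : PS14 s r | s (n+1) (x.1 (n+1)) = w} := by
      ext x
      show r n (x.1 n) = w ↔ s (n+1) (x.1 (n+1)) = w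
      rw [x.2 n]
    rw [div_mul_cancel₀ _ (ne_of_gt (hνpos (n+1) w)), ENNReal.ofReal_toReal (hIfin (n+1) w)]
    rw [hIdef]
    simp only
    rw [hset]
  · intro n v
    show (I n v).toReal / ν n v = ∑ e : {e : E n // s n e = v},
      p n e.1 * ((I (n+1) (r n e.1)).toReal / ν (n+1) (r n e.1))
    rw [hIkey n v, ENNReal.toReal_sum (fun e _ => by
      exact ENNReal.mul_ne_top ENNReal.ofReal_ne_top (hIfin (n+1) (r n e.1)))]
    rw [Finset.sum_div]
    refine Finset.sum_congr rfl fun e _ => ?_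
    rw [ENNReal.toReal_mul, ENNReal.toReal_ofReal
      (div_nonneg (mul_nonneg (le_of_lt (hppos n e.1)) (le_of_lt (hνpos n v)))
        (le_of_lt (hνpos (n+1) (r n e.1))))]
    have h1 : ν n v ≠ 0 := ne_of_gt (hνpos n v)
    have h2 : ν (n+1) (r n e.1) ≠ 0 := ne_of_gt (hνpos (n+1) (r n e.1))
    field_simp
  · intro n v
    constructor
    · exact div_nonneg ENNReal.toReal_nonneg (le_of_lt (hνpos n v))
    · rw [div_le_iff₀ (hνpos n v)]
      exact ENNReal.toReal_le_of_le_ofReal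
        (mul_nonneg hC0 (le_of_lt (hνpos n v))) (hIle n v)
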